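/- For every Γ > 0, the derivative of b_Γ attains its maximum at 0, and b_Γ'(0) = (1 - e^{-Γ})/(1 + e^{-Γ}), which satisfies b_Γ'(0) ≤ exp(-e^{-Γ}) < 1. Consequently b_Γ is a strict contraction: |b_Γ(x) - b_Γ(y)| ≤ exp(-e^{-Γ})·|x - y| for all x, y. -/

import Mathlib

open Real

private lemma key_poly {ε u v : ℝ} (hε0 : 0 < ε) (hε1 : ε < 1) (hu : 0 < u) (hv : 0 < v)
    (huv : u * v = ε ^ 2) (hs : 2 * ε ≤ u + v) :
    2 * ε / (1 + ε) ≤ u / (1 + u) + v / (1 + v) := by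
  have h1 : 0 < 1 + u := by positivity
  have h2 : 0 < 1 + v := by positivity
  have h3 : 0 < 1 + ε := by positivity
  rw [div_add_div _ _ (ne_of_gt h1) (ne_of_gt h2), div_le_div_iff₀ h3 (by positivity)]
  nlinarith [mul_nonneg (sub_nonneg.2 hε1.le) (sub_nonneg.2 hs)]

private lemma key_ineq {ε t : ℝ} (hε0 : 0 < ε) (hε1 : ε < 1) (ht : 0 < t) :
    2 * ε / (1 + ε) ≤ ε / t / (1 + ε / t) + ε * t / (1 + ε * t) := by
  apply key_poly hε0 hε1 (by positivity) (by positivity)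
  · field_simp
  · have h : 0 ≤ ε * (t - 1) ^ 2 / t := by positivity
    have heq : ε / t + ε * t - 2 * ε = ε * (t - 1) ^ 2 / t := by field_simp; ring
    linarith

private lemma upper_ineq {u v : ℝ} (hu : 0 < u) (hv : 0 < v) (huv : u * v < 1) :
    u / (1 + u) + v / (1 + v) ≤ 1 := by
  rw [div_add_div _ _ (by positivity) (by positivity), div_le_one (by positivity)]
  nlinarith

/-- The derivative of `b_Γ` attains its maximum at `0`, where it equals
`(1 - e^{-Γ})/(1 + e^{-Γ}) ≤ exp(-e^{-Γ}) < 1`; consequently `b_Γ` is a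
strict contraction with constant `exp(-e^{-Γ})`. -/
theorem stmt_2 (Γ : ℝ) (hΓ : 0 < Γ) (b : ℝ → ℝ)
    (hb : b = fun y => y + Real.log ((1 + Real.exp (-Γ - y)) / (1 + Real.exp (-Γ + y)))) :
    (∀ x, deriv b x ≤ deriv b 0) ∧
    deriv b 0 = (1 - Real.exp (-Γ)) / (1 + Real.exp (-Γ)) ∧
    deriv b 0 ≤ Real.exp (-Real.exp (-Γ)) ∧
    Real.exp (-Real.exp (-Γ)) < 1 ∧
    ∀ x y, |b x - b y| ≤ Real.exp (-Real.exp (-Γ)) * |x - y| := by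
  set ε := Real.exp (-Γ) with hεdef
  have hε0 : 0 < ε := Real.exp_pos _
  have hε1 : ε < 1 := by
    rw [hεdef]
    calc Real.exp (-Γ) < Real.exp 0 := Real.exp_lt_exp.2 (by linarith)
    _ = 1 := Real.exp_zero
  -- derivative formula
  have hbeq : b = fun y => y + (Real.log (1 + Real.exp (-Γ - y)) - Real.log (1 + Real.exp (-Γ + y))) := by
    rw [hb]; funext y
    rw [Real.log_div (by positivity) (by positivity)]
  have hder : ∀ y : ℝ, HasDerivAt b
      (1 - Real.exp (-Γ - y) / (1 + Real.exp (-Γ - y)) - Real.exp (-Γ + y) / (1 + Real.exp (-Γ + y))) y := by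
    intro y
    have hA : HasDerivAt (fun y : ℝ => 1 + Real.exp (-Γ - y)) (-Real.exp (-Γ - y)) y := by
      have h0 : HasDerivAt (fun y : ℝ => -Γ - y) (-1) y := (hasDerivAt_id y).const_sub (-Γ)
      have := (Real.hasDerivAt_exp (-Γ - y)).comp y h0
      have h2 := this.const_add (1 : ℝ)
      exact h2.congr_deriv (by ring)
    have hB : HasDerivAt (fun y : ℝ => 1 + Real.exp (-Γ + y)) (Real.exp (-Γ + y)) y := by
      have h0 : HasDerivAt (fun y : ℝ => -Γ + y) (1) y := (hasDerivAt_id y).const_add (-Γ)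
      have := (Real.hasDerivAt_exp (-Γ + y)).comp y h0
      have h2 := this.const_add (1 : ℝ)
      exact h2.congr_deriv (by ring)
    have hlogA := hA.log (by positivity)
    have hlogB := hB.log (by positivity)
    have := (hasDerivAt_id y).add (hlogA.sub hlogB)
    rw [hbeq]
    refine this.congr_deriv ?_
    ring
  have hderiv : ∀ y : ℝ, deriv b y
      = 1 - Real.exp (-Γ - y) / (1 + Real.exp (-Γ - y)) - Real.exp (-Γ + y) / (1 + Real.exp (-Γ + y)) :=
    fun y => (hder y).deriv
  have hd0 : deriv b 0 = (1 - ε) / (1 + ε) := by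
    rw [hderiv 0]
    have : (-Γ - 0 : ℝ) = -Γ := by ring
    rw [this, show (-Γ + 0 : ℝ) = -Γ by ring, ← hεdef]
    have h1 : (0:ℝ) < 1 + ε := by positivity
    field_simp
    ring
  -- rewrite deriv b y using ε and t = exp y
  have hrw : ∀ y : ℝ, Real.exp (-Γ - y) = ε / Real.exp y ∧ Real.exp (-Γ + y) = ε * Real.exp y := by
    intro y
    constructor
    · rw [hεdef, ← Real.exp_sub]
    · rw [hεdef, ← Real.exp_add]
  have hmax : ∀ y : ℝ, deriv b y ≤ deriv b 0 := by
    intro y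
    rw [hderiv y, hd0]
    obtain ⟨h1, h2⟩ := hrw y
    rw [h1, h2]
    have ht : 0 < Real.exp y := Real.exp_pos y
    have := key_ineq hε0 hε1 ht
    have heq : (1 - ε) / (1 + ε) = 1 - 2 * ε / (1 + ε) := by
      field_simp; ring
    rw [heq]
    linarith
  have hnonneg : ∀ y : ℝ, 0 ≤ deriv b y := by
    intro y
    rw [hderiv y]
    obtain ⟨h1, h2⟩ := hrw y
    rw [h1, h2]
    have ht : 0 < Real.exp y := Real.exp_pos y
    have hu : 0 < ε / Real.exp y := by positivity
    have hv : 0 < ε * Real.exp y := by positivity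
    have huv : (ε / Real.exp y) * (ε * Real.exp y) < 1 := by
      rw [show (ε / Real.exp y) * (ε * Real.exp y) = ε^2 * (Real.exp y / Real.exp y) by ring,
        div_self (ne_of_gt ht), mul_one]
      nlinarith
    have := upper_ineq hu hv huv
    linarith
  have hle : deriv b 0 ≤ Real.exp (-ε) := by
    rw [hd0]
    have h1 : 1 - ε ≤ Real.exp (-ε) := by
      have := Real.add_one_le_exp (-ε); linarith
    have h2 : (1 - ε) / (1 + ε) ≤ 1 - ε := by
      rw [div_le_iff₀ (by positivity)]
      nlinarith
    linarith
  have hlt1 : Real.exp (-ε) < 1 := by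
    rw [show (1:ℝ) = Real.exp 0 from (Real.exp_zero).symm]
    exact Real.exp_lt_exp.2 (by linarith)
  refine ⟨hmax, hd0, hle, hlt1, ?_⟩
  -- Lipschitz
  have hdiff : Differentiable ℝ b := fun y => (hder y).differentiableAt
  have hC : ∀ y : ℝ, ‖deriv b y‖₊ ≤ (⟨Real.exp (-ε), (Real.exp_pos _).le⟩ : NNReal) := by
    intro y
    apply NNReal.coe_le_coe.1
    rw [coe_nnnorm, Real.norm_eq_abs, abs_of_nonneg (hnonneg y)]
    exact le_trans (hmax y) hle
  have hlip := lipschitzWith_of_nnnorm_deriv_le hdiff hC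
  intro x y
  have := hlip.dist_le_mul x y
  rw [Real.dist_eq, Real.dist_eq] at this
  exact this
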